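/- Let a, ã ∈ ℂ, let t, t̃ > 0 and c > 0 be real numbers. If c ≤ 2·Re(conj(ã)·a)/t̃ − (|ã|²/t̃²)·t, then t ≤ |a|²/c. (The approximated constraint implies the original SINR constraint.) -/

import Mathlib

lemma re_le_abs_mul (a a' : ℂ) :
    ((starRingEnd ℂ) a' * a).re ≤ ‖a'‖ * ‖a‖ := by
  calc ((starRingEnd ℂ) a' * a).re ≤ ‖(starRingEnd ℂ) a' * a‖ :=
        Complex.re_le_norm _
    _ = ‖a'‖ * ‖a‖ := by
        rw [norm_mul, Complex.norm_conj]

/-- The approximated (inner-convex) constraint implies the original SINR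
    constraint: if c ≤ 2·Re(conj(ã)·a)/t̃ − (|ã|²/t̃²)·t then t ≤ |a|²/c.
    (Here `a'` plays the role of ã and `t'` of t̃.) -/
theorem inner_approximation_implies_sinr
    (a a' : ℂ) (t t' c : ℝ) (ht : 0 < t) (ht' : 0 < t') (hc : 0 < c)
    (hcon : c ≤ 2 * ((starRingEnd ℂ) a' * a).re / t' - ‖a'‖ ^ 2 / t' ^ 2 * t) :
    t ≤ ‖a‖ ^ 2 / c := by
  have h1 := re_le_abs_mul a a'
  have hA : (0:ℝ) ≤ ‖a‖ := norm_nonneg a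
  have hA' : (0:ℝ) ≤ ‖a'‖ := norm_nonneg a'
  have hcon2 : c * t' ^ 2 ≤
      2 * ((starRingEnd ℂ) a' * a).re * t' - ‖a'‖ ^ 2 * t := by
    have h := mul_le_mul_of_nonneg_right hcon (by positivity : (0:ℝ) ≤ t' ^ 2)
    have heq : (2 * ((starRingEnd ℂ) a' * a).re / t'
        - ‖a'‖ ^ 2 / t' ^ 2 * t) * t' ^ 2
        = 2 * ((starRingEnd ℂ) a' * a).re * t' - ‖a'‖ ^ 2 * t := by
      field_simp
    linarith [heq ▸ h]
  rw [le_div_iff₀ hc]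
  have hsq := sq_nonneg (‖a‖ * t' - ‖a'‖ * t)
  have h2 := mul_le_mul_of_nonneg_right hcon2 ht.le
  have h3 := mul_le_mul_of_nonneg_right h1 (by positivity : (0:ℝ) ≤ t' * t)
  nlinarith [mul_pos (mul_pos ht' ht') hc, sq_nonneg t']
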